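/- Let G = ⟨e₁,e₂⟩ ≅ ℤ², g ∈ {e₁, e₂, e₁e₂}, and let C be any subset of the set of commutators { [x_g, y₁^{(k₁)}, …, y_n^{(k_n)}] : n ≥ 0, k₁, …, k_n ≥ 0 }. Then there exist finitely many f₁, …, f_s ∈ C such that ⟨f₁, …, f_s⟩^{T_G} + Id_G(UT₃⁽⁻⁾, Γ(e₁,e₂)) = ⟨C⟩^{T_G} + Id_G(UT₃⁽⁻⁾, Γ(e₁,e₂)). -/

import Mathlib

open FreeLieAlgebra

attribute [local instance 100] LieRing.ofAssociativeRing

/-- The free `G`-graded Lie algebra over `K` on variables `x_{i,g}`, `i ∈ ℕ`, `g ∈ G`. -/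
abbrev FL (K : Type*) [Field K] (G : Type*) := FreeLieAlgebra K (ℕ × G)

section Framework

variable (K : Type*) [Field K] (G : Type*) [CommGroup G]

/-- `IsHom K G g a` : `a` is homogeneous of degree `g` in the free graded Lie algebra. -/
inductive IsHom : G → FL K G → Prop
  | var (i : ℕ) (g : G) : IsHom g (of K (i, g))
  | zero (g : G) : IsHom g 0
  | add {g : G} {a b : FL K G} : IsHom g a → IsHom g b → IsHom g (a + b)
  | smul {g : G} {a : FL K G} (c : K) : IsHom g a → IsHom g (c • a)
  | lie {g h : G} {a b : FL K G} : IsHom g a → IsHom h b → IsHom (g * h) ⁅a, b⁆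

/-- A graded substitution: an endomorphism sending each variable `x_{i,g}` to a homogeneous
element of degree `g`. -/
def IsGradedSubst (φ : FL K G →ₗ⁅K⁆ FL K G) : Prop :=
  ∀ (i : ℕ) (g : G), IsHom K G g (φ (of K (i, g)))

/-- A `T_G`-ideal: a Lie ideal invariant under all graded substitutions. -/
def IsTIdeal (I : LieIdeal K (FL K G)) : Prop :=
  ∀ φ : FL K G →ₗ⁅K⁆ FL K G, IsGradedSubst K G φ → ∀ a ∈ I, φ a ∈ I

/-- The `T_G`-ideal generated by a set `S`. -/
noncomputable def tClosure (S : Set (FL K G)) : LieIdeal K (FL K G) :=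
  sInf {I : LieIdeal K (FL K G) | IsTIdeal K G I ∧ S ⊆ ↑I}

/-- The graded polynomial identities of a `G`-graded Lie algebra `(A, Γ)`, as a Lie ideal of the
free graded Lie algebra. -/
def gradedIdeal (A : Type*) [LieRing A] [LieAlgebra K A] (Γ : G → Submodule K A) :
    LieIdeal K (FL K G) where
  carrier := {f | ∀ ψ : FL K G →ₗ⁅K⁆ A, (∀ (i : ℕ) (g : G), ψ (of K (i, g)) ∈ Γ g) → ψ f = 0}
  add_mem' := by
    intro a b ha hb ψ hψ
    rw [map_add ψ, ha ψ hψ, hb ψ hψ, add_zero]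
  zero_mem' := by
    intro ψ _
    exact ψ.map_zero
  smul_mem' := by
    intro c a ha ψ hψ
    rw [map_smul ψ, ha ψ hψ, smul_zero]
  lie_mem := by
    intro x m hm ψ hψ
    rw [ψ.map_lie, hm ψ hψ, lie_zero]

/-- Left-normed iterated commutator `[x, l₁, l₂, …]`. -/
noncomputable def lnorm (x : FL K G) (l : List (FL K G)) : FL K G := l.foldl (fun a b => ⁅a, b⁆) x

/-- The list `y₁^{(p₁)}, …, y_r^{(p_r)}` of trivial-degree variables with multiplicities
(0-indexed: the variables are `x_{0,1}, …, x_{r-1,1}`). -/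
noncomputable def yRun (p : ℕ → ℕ) : ℕ → List (FL K G)
  | 0 => []
  | n + 1 => yRun p n ++ List.replicate (p n) (of K (n, (1 : G)))

/-- 3×3 matrices. -/
abbrev M3 (K : Type*) [Field K] := Matrix (Fin 3) (Fin 3) K

/-- Matrix units. -/
def E3 (i j : Fin 3) : M3 K := Matrix.single i j 1

/-- The elementary grading `Γ(g,h)` on upper triangular 3×3 matrices:
`deg e₁₁ = deg e₂₂ = deg e₃₃ = 1`, `deg e₁₂ = g`, `deg e₂₃ = h`, `deg e₁₃ = gh`.  The component of
degree `l` is the span of the matrix units of degree `l`. -/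
def utGrading (g h : G) : G → Submodule K (M3 K) := fun l =>
  Submodule.span K {m : M3 K |
    (l = 1 ∧ (m = E3 K 0 0 ∨ m = E3 K 1 1 ∨ m = E3 K 2 2)) ∨
    (l = g ∧ m = E3 K 0 1) ∨ (l = h ∧ m = E3 K 1 2) ∨ (l = g * h ∧ m = E3 K 0 2)}

/-- The support of the grading `Γ(g,h)`. -/
def utSupp (g h : G) : Set G := {l | utGrading K G g h l ≠ ⊥}

/-- The graded identities `Id_G(UT₃⁽⁻⁾, Γ(g,h))`. -/
def IdUT3 (g h : G) : LieIdeal K (FL K G) := gradedIdeal K G (M3 K) (utGrading K G g h)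

/-- 2×2 matrices. -/
abbrev M2 (K : Type*) [Field K] := Matrix (Fin 2) (Fin 2) K

/-- Matrix units. -/
def E2 (i j : Fin 2) : M2 K := Matrix.single i j 1

/-- The space of upper triangular 2×2 matrices, `UT₂⁽⁻⁾`. -/
def ut2 : Submodule K (M2 K) := Submodule.span K {E2 K 0 0, E2 K 1 1, E2 K 0 1}

/-- Ordinary (ungraded) Lie polynomial identities of `UT₂⁽⁻⁾`. -/
def IdUT2 : Set (FL K G) :=
  {f | ∀ ψ : FL K G →ₗ⁅K⁆ M2 K, (∀ (i : ℕ) (g : G), ψ (of K (i, g)) ∈ ut2 K) → ψ f = 0}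

/-- The free Lie subalgebra `L(Y)` on the trivial-degree variables. -/
noncomputable def LY : LieSubalgebra K (FL K G) :=
  LieSubalgebra.lieSpan K (FL K G) {a | ∃ i : ℕ, a = of K (i, (1 : G))}

/-- Exponent bound: `0 ≤ p ℓ < |K|` when `K` is finite (no bound when `K` is infinite). -/
def expOK (r : ℕ) (p : ℕ → ℕ) : Prop := ∀ ℓ < r, Finite K → p ℓ < Nat.card K

end Framework

/-! ## Statement 4 : finite basis for sets of one-`x` commutators, universal grading -/

/-- The free abelian group of rank 2, `G = ⟨e₁, e₂⟩ ≅ ℤ²` (multiplicative notation). -/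
abbrev Gu : Type := Multiplicative (ℤ × ℤ)

/-- The first free generator. -/
def e1 : Gu := Multiplicative.ofAdd (1, 0)

/-- The second free generator. -/
def e2 : Gu := Multiplicative.ofAdd (0, 1)

/-! ### Auxiliary development -/

section Aux

open List

variable (K : Type*) [Field K] (G : Type*) [CommGroup G]

/-! #### lnorm basics -/

lemma lnorm_nil (x : FL K G) : lnorm K G x [] = x := rfl

lemma lnorm_cons (x a : FL K G) (l : List (FL K G)) :
    lnorm K G x (a :: l) = lnorm K G ⁅x, a⁆ l := rfl

lemma lnorm_append (x : FL K G) (l l' : List (FL K G)) :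
    lnorm K G x (l ++ l') = lnorm K G (lnorm K G x l) l' := by
  simp [lnorm, List.foldl_append]

lemma lnorm_sub (x y : FL K G) (l : List (FL K G)) :
    lnorm K G (x - y) l = lnorm K G x l - lnorm K G y l := by
  induction l generalizing x y with
  | nil => rfl
  | cons a l ih => rw [lnorm_cons, lnorm_cons, lnorm_cons, sub_lie]; exact ih _ _

lemma lnorm_map (φ : FL K G →ₗ⁅K⁆ FL K G) (x : FL K G) (l : List (FL K G)) :
    φ (lnorm K G x l) = lnorm K G (φ x) (l.map φ) := by
  induction l generalizing x with
  | nil => rfl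
  | cons a l ih => rw [lnorm_cons, List.map_cons, lnorm_cons, ← φ.map_lie]; exact ih _

lemma lnorm_mem (I : LieIdeal K (FL K G)) {x : FL K G} (hx : x ∈ I) (l : List (FL K G)) :
    lnorm K G x l ∈ I := by
  induction l generalizing x with
  | nil => exact hx
  | cons a l ih =>
    rw [lnorm_cons]
    refine ih ?_
    rw [← lie_skew]
    exact neg_mem (I.lie_mem hx)

/-! #### index runs -/

/-- The index list underlying `yRun`. -/
def iRun (p : ℕ → ℕ) : ℕ → List ℕ
  | 0 => []
  | n + 1 => iRun p n ++ List.replicate (p n) n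

lemma yRun_eq (p : ℕ → ℕ) (n : ℕ) :
    yRun K G p n = (iRun p n).map (fun m => of K (m, (1 : G))) := by
  induction n with
  | zero => rfl
  | succ n ih => simp [yRun, iRun, ih]

lemma count_iRun (p : ℕ → ℕ) (n m : ℕ) :
    (iRun p n).count m = if m < n then p m else 0 := by
  induction n with
  | zero => simp [iRun]
  | succ n ih =>
    rw [iRun, List.count_append, ih, List.count_replicate]
    rcases lt_trichotomy m n with h | rfl | h
    · have h1 : m < n + 1 := Nat.lt_succ_of_lt h
      have h2 : ¬ (n == m) = true := by simp; omega
      simp [h, h1, h2]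
    · simp
    · have h1 : ¬ m < n + 1 := by omega
      have h2 : ¬ m < n := by omega
      have h3 : ¬ (n == m) = true := by simp; omega
      simp [h1, h2, h3]

lemma mem_iRun_lt (p : ℕ → ℕ) (n : ℕ) {a : ℕ} (ha : a ∈ iRun p n) : a < n := by
  induction n with
  | zero => simp [iRun] at ha
  | succ n ih =>
    rw [iRun, List.mem_append] at ha
    rcases ha with h | h
    · exact Nat.lt_succ_of_lt (ih h)
    · rw [List.eq_of_mem_replicate h]; omega

/-! #### tClosure API -/

lemma mem_sInf_lieIdeal {S : Set (LieIdeal K (FL K G))} {a : FL K G} :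
    a ∈ sInf S ↔ ∀ I ∈ S, a ∈ I := by
  rw [← LieSubmodule.mem_coe, LieSubmodule.coe_sInf]
  simp

lemma subset_tClosure (S : Set (FL K G)) : S ⊆ tClosure K G S := by
  intro a ha
  rw [SetLike.mem_coe, tClosure, mem_sInf_lieIdeal]
  exact fun I hI => hI.2 ha

lemma tClosure_le {S : Set (FL K G)} {I : LieIdeal K (FL K G)} (hT : IsTIdeal K G I)
    (hS : S ⊆ I) : tClosure K G S ≤ I :=
  sInf_le ⟨hT, hS⟩

lemma isTIdeal_tClosure (S : Set (FL K G)) : IsTIdeal K G (tClosure K G S) := by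
  intro φ hφ a ha
  rw [tClosure, mem_sInf_lieIdeal] at ha ⊢
  exact fun I hI => hI.1 φ hφ a (ha I hI)

lemma tClosure_mono {S S' : Set (FL K G)} (h : S ⊆ S') : tClosure K G S ≤ tClosure K G S' := by
  apply sInf_le_sInf
  rintro I ⟨hI1, hI2⟩
  exact ⟨hI1, h.trans hI2⟩

lemma isTIdeal_sup {I J : LieIdeal K (FL K G)} (hI : IsTIdeal K G I) (hJ : IsTIdeal K G J) :
    IsTIdeal K G (I ⊔ J) := by
  intro φ hφ a ha
  rw [LieSubmodule.mem_sup] at ha ⊢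
  obtain ⟨y, hy, z, hz, rfl⟩ := ha
  exact ⟨φ y, hI φ hφ y hy, φ z, hJ φ hφ z hz, (φ.map_add y z).symm⟩

end Aux

section Matrices

variable (K : Type*) [Field K]

lemma E3_mul (i j p q : Fin 3) :
    E3 K i j * E3 K p q = if j = p then E3 K i q else 0 := by
  by_cases h : j = p
  · subst h
    simpa [E3] using Matrix.single_mul_single_same (c := (1:K)) i j q 1
  · simp [E3, h]

lemma memE00 (l : Gu) (h : l = 1) : E3 K 0 0 ∈ utGrading K Gu e1 e2 l :=
  Submodule.subset_span (Or.inl ⟨h, Or.inl rfl⟩)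

lemma memE11 (l : Gu) (h : l = 1) : E3 K 1 1 ∈ utGrading K Gu e1 e2 l :=
  Submodule.subset_span (Or.inl ⟨h, Or.inr (Or.inl rfl)⟩)

lemma memE22 (l : Gu) (h : l = 1) : E3 K 2 2 ∈ utGrading K Gu e1 e2 l :=
  Submodule.subset_span (Or.inl ⟨h, Or.inr (Or.inr rfl)⟩)

lemma memE01 (l : Gu) (h : l = e1) : E3 K 0 1 ∈ utGrading K Gu e1 e2 l :=
  Submodule.subset_span (Or.inr (Or.inl ⟨h, rfl⟩))

lemma memE12 (l : Gu) (h : l = e2) : E3 K 1 2 ∈ utGrading K Gu e1 e2 l :=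
  Submodule.subset_span (Or.inr (Or.inr (Or.inl ⟨h, rfl⟩)))

lemma memE02 (l : Gu) (h : l = e1 * e2) : E3 K 0 2 ∈ utGrading K Gu e1 e2 l :=
  Submodule.subset_span (Or.inr (Or.inr (Or.inr ⟨h, rfl⟩)))

/-- Brackets respect the grading. -/
lemma bracket_grading : ∀ {l l' : Gu} {a b : M3 K}, a ∈ utGrading K Gu e1 e2 l →
    b ∈ utGrading K Gu e1 e2 l' → ⁅a, b⁆ ∈ utGrading K Gu e1 e2 (l * l') := by
  have key : ∀ (l l' : Gu) (x y : M3 K),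
      x ∈ {m : M3 K |
        (l = 1 ∧ (m = E3 K 0 0 ∨ m = E3 K 1 1 ∨ m = E3 K 2 2)) ∨
        (l = e1 ∧ m = E3 K 0 1) ∨ (l = e2 ∧ m = E3 K 1 2) ∨ (l = e1 * e2 ∧ m = E3 K 0 2)} →
      y ∈ {m : M3 K |
        (l' = 1 ∧ (m = E3 K 0 0 ∨ m = E3 K 1 1 ∨ m = E3 K 2 2)) ∨
        (l' = e1 ∧ m = E3 K 0 1) ∨ (l' = e2 ∧ m = E3 K 1 2) ∨ (l' = e1 * e2 ∧ m = E3 K 0 2)} →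
      ⁅x, y⁆ ∈ utGrading K Gu e1 e2 (l * l') := by
    intro l l' x y hx hy
    rcases hx with ⟨rfl, (rfl | rfl | rfl)⟩ | ⟨rfl, rfl⟩ | ⟨rfl, rfl⟩ | ⟨rfl, rfl⟩ <;>
      rcases hy with ⟨rfl, (rfl | rfl | rfl)⟩ | ⟨rfl, rfl⟩ | ⟨rfl, rfl⟩ | ⟨rfl, rfl⟩ <;>
      rw [Ring.lie_def] <;> simp only [E3_mul] <;> simp
    all_goals first
    | exact zero_mem _
    | (refine memE00 K _ ?_; decide)
    | (refine memE11 K _ ?_; decide)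
    | (refine memE22 K _ ?_; decide)
    | (refine memE01 K _ ?_; decide)
    | (refine neg_mem (memE01 K _ ?_); decide)
    | (refine memE12 K _ ?_; decide)
    | (refine neg_mem (memE12 K _ ?_); decide)
    | (refine memE02 K _ ?_; decide)
    | (refine neg_mem (memE02 K _ ?_); decide)
  intro l l' a b ha hb
  unfold utGrading at ha hb
  have half : ∀ x, x ∈ {m : M3 K |
      (l = 1 ∧ (m = E3 K 0 0 ∨ m = E3 K 1 1 ∨ m = E3 K 2 2)) ∨
      (l = e1 ∧ m = E3 K 0 1) ∨ (l = e2 ∧ m = E3 K 1 2) ∨ (l = e1 * e2 ∧ m = E3 K 0 2)} →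
      ⁅x, b⁆ ∈ utGrading K Gu e1 e2 (l * l') := by
    intro x hx
    induction hb using Submodule.span_induction with
    | mem y hy => exact key l l' x y hx hy
    | zero => rw [lie_zero]; exact zero_mem _
    | add u v _ _ hu hv => rw [lie_add]; exact add_mem hu hv
    | smul c u _ hu => rw [lie_smul]; exact Submodule.smul_mem _ _ hu
  induction ha using Submodule.span_induction with
  | mem x hx => exact half x hx
  | zero => rw [zero_lie]; exact zero_mem _
  | add u v _ _ hu hv => rw [add_lie]; exact add_mem hu hv
  | smul c u _ hu => rw [smul_lie]; exact Submodule.smul_mem _ _ hu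

/-- Degree-one elements commute. -/
lemma deg_one_comm : ∀ {a b : M3 K}, a ∈ utGrading K Gu e1 e2 1 →
    b ∈ utGrading K Gu e1 e2 1 → ⁅a, b⁆ = 0 := by
  have hset : ∀ x : M3 K, x ∈ {m : M3 K |
        ((1:Gu) = 1 ∧ (m = E3 K 0 0 ∨ m = E3 K 1 1 ∨ m = E3 K 2 2)) ∨
        ((1:Gu) = e1 ∧ m = E3 K 0 1) ∨ ((1:Gu) = e2 ∧ m = E3 K 1 2) ∨
        ((1:Gu) = e1 * e2 ∧ m = E3 K 0 2)} →
      (x = E3 K 0 0 ∨ x = E3 K 1 1 ∨ x = E3 K 2 2) := by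
    rintro x (⟨-, h⟩ | ⟨h, -⟩ | ⟨h, -⟩ | ⟨h, -⟩)
    · exact h
    all_goals exact absurd h (by decide)
  intro a b ha hb
  unfold utGrading at ha hb
  have half : ∀ x, (x = E3 K 0 0 ∨ x = E3 K 1 1 ∨ x = E3 K 2 2) → ⁅x, b⁆ = 0 := by
    intro x hx
    induction hb using Submodule.span_induction with
    | mem y hy =>
      rcases hx with rfl | rfl | rfl <;> rcases hset y hy with rfl | rfl | rfl <;>
        rw [Ring.lie_def] <;> simp only [E3_mul] <;> simp
    | zero => rw [lie_zero]
    | add u v _ _ hu hv => rw [lie_add, hu, hv, add_zero]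
    | smul c u _ hu => rw [lie_smul, hu, smul_zero]
  induction ha using Submodule.span_induction with
  | mem x hx => exact half x (hset x hx)
  | zero => rw [zero_lie]
  | add u v _ _ hu hv => rw [add_lie, hu, hv, add_zero]
  | smul c u _ hu => rw [smul_lie, hu, smul_zero]

end Matrices

section IdLemmas

variable (K : Type*) [Field K]

lemma mem_IdUT3 {f : FL K Gu} :
    f ∈ IdUT3 K Gu e1 e2 ↔ ∀ ψ : FL K Gu →ₗ⁅K⁆ M3 K,
      (∀ (i : ℕ) (g : Gu), ψ (of K (i, g)) ∈ utGrading K Gu e1 e2 g) → ψ f = 0 :=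
  Iff.rfl

/-- Evaluations send homogeneous elements into the corresponding component. -/
lemma eval_isHom (ψ : FL K Gu →ₗ⁅K⁆ M3 K)
    (hψ : ∀ (i : ℕ) (g : Gu), ψ (of K (i, g)) ∈ utGrading K Gu e1 e2 g) :
    ∀ {g : Gu} {a : FL K Gu}, IsHom K Gu g a → ψ a ∈ utGrading K Gu e1 e2 g := by
  intro g a h
  induction h with
  | var i g => exact hψ i g
  | zero g => rw [map_zero ψ]; exact zero_mem _
  | add h1 h2 ih1 ih2 => rw [map_add ψ]; exact add_mem ih1 ih2
  | smul c h ih => rw [map_smul ψ]; exact Submodule.smul_mem _ _ ih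
  | lie h1 h2 ih1 ih2 => rw [ψ.map_lie]; exact bracket_grading K ih1 ih2

/-- `Id_G(UT₃⁻)` is a `T_G`-ideal. -/
lemma isTIdeal_IdUT3 : IsTIdeal K Gu (IdUT3 K Gu e1 e2) := by
  intro φ hφ a ha
  rw [mem_IdUT3] at ha ⊢
  intro ψ hψ
  have hcomp : ∀ (i : ℕ) (g : Gu),
      (ψ.comp φ) (of K (i, g)) ∈ utGrading K Gu e1 e2 g := by
    intro i g
    rw [LieHom.comp_apply]
    exact eval_isHom K ψ hψ (hφ i g)
  have := ha (ψ.comp φ) hcomp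
  rwa [LieHom.comp_apply] at this

/-- Brackets of trivial-degree variables are identities. -/
lemma lie_var_one_mem (i j : ℕ) :
    ⁅of K (i, (1 : Gu)), of K (j, (1 : Gu))⁆ ∈ IdUT3 K Gu e1 e2 := by
  rw [mem_IdUT3]
  intro ψ hψ
  rw [ψ.map_lie]
  exact deg_one_comm K (hψ i 1) (hψ j 1)

/-- Permuting trivial-degree variables in a left-normed commutator changes it by an identity. -/
lemma perm_diff_mem {l l' : List ℕ} (h : l.Perm l') (x : FL K Gu) :
    lnorm K Gu x (l.map fun m => of K (m, (1 : Gu))) -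
      lnorm K Gu x (l'.map fun m => of K (m, (1 : Gu))) ∈ IdUT3 K Gu e1 e2 := by
  set v : ℕ → FL K Gu := fun m => of K (m, (1 : Gu)) with hv
  induction h generalizing x with
  | nil => simpa using zero_mem _
  | cons a h ih =>
    rw [List.map_cons, List.map_cons, lnorm_cons, lnorm_cons]
    exact ih _
  | swap a b l =>
    rw [List.map_cons, List.map_cons, List.map_cons, List.map_cons,
      lnorm_cons, lnorm_cons, lnorm_cons, lnorm_cons, ← lnorm_sub]
    have hd : ⁅⁅x, v b⁆, v a⁆ - ⁅⁅x, v a⁆, v b⁆ = ⁅x, ⁅v b, v a⁆⁆ := by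
      rw [leibniz_lie]
      have : ⁅v b, ⁅x, v a⁆⁆ = -⁅⁅x, v a⁆, v b⁆ := (lie_skew _ _).symm
      rw [this]
      abel
    rw [hd]
    exact lnorm_mem K Gu _ ((IdUT3 K Gu e1 e2).lie_mem (lie_var_one_mem K b a)) _
  | trans h1 h2 ih1 ih2 =>
    have := add_mem (ih1 x) (ih2 x)
    rwa [sub_add_sub_cancel] at this

end IdLemmas

section Embedding

/-- Extract a strictly monotone index embedding from `SublistForall₂`. -/
lemma sfa_embed {r : ℕ → ℕ → Prop} :
    ∀ {L L' : List ℕ}, List.SublistForall₂ r L L' →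
      ∃ t : ℕ → ℕ, StrictMono t ∧
        ∀ j, j < L.length → t j < L'.length ∧ r (L.getD j 0) (L'.getD (t j) 0) := by
  intro L L' h
  induction h with
  | nil => exact ⟨id, strictMono_id, fun j hj => by simp at hj⟩
  | @cons a b L L' hab h ih =>
    obtain ⟨t, ht, hc⟩ := ih
    refine ⟨fun j => match j with | 0 => 0 | j + 1 => t j + 1, ?_, ?_⟩
    · intro u w huw
      match u, w with
      | 0, 0 => omega
      | 0, w + 1 => exact Nat.succ_pos _
      | u + 1, w + 1 => exact Nat.succ_lt_succ (ht (by omega))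
      | u + 1, 0 => omega
    · intro j hj
      match j with
      | 0 => exact ⟨Nat.succ_pos _, by simpa using hab⟩
      | j + 1 =>
        have hj' : j < L.length := by simpa using hj
        obtain ⟨h1, h2⟩ := hc j hj'
        exact ⟨Nat.succ_lt_succ h1, by simpa using h2⟩
  | @cons_right b L L' h ih =>
    obtain ⟨t, ht, hc⟩ := ih
    refine ⟨fun j => t j + 1, fun u w huw => Nat.succ_lt_succ (ht huw), fun j hj => ?_⟩
    obtain ⟨h1, h2⟩ := hc j hj
    exact ⟨Nat.succ_lt_succ h1, by simpa using h2⟩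

/-- The key bridge: if the exponent list of `f` Higman-embeds into that of `f'`, then
`f'` lies in the `T_G`-ideal generated by `f` together with the graded identities. -/
lemma bridge (K : Type*) [Field K] {g : Gu} (hg1 : g ≠ 1) {n n' : ℕ} {k k' : ℕ → ℕ}
    (hemb : List.SublistForall₂ (· ≤ ·) ((List.range n).map k) ((List.range n').map k')) :
    lnorm K Gu (of K (0, g)) (yRun K Gu k' n') ∈
      tClosure K Gu {lnorm K Gu (of K (0, g)) (yRun K Gu k n)} ⊔ IdUT3 K Gu e1 e2 := by
  classical
  obtain ⟨t, htmono, htc⟩ := sfa_embed hemb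
  have htfact : ∀ j, j < n → t j < n' ∧ k j ≤ k' (t j) := by
    intro j hj
    have hlen : j < ((List.range n).map k).length := by simpa using hj
    obtain ⟨h1, h2⟩ := htc j hlen
    have hlt : t j < n' := by simpa using h1
    refine ⟨hlt, ?_⟩
    rw [List.getD_eq_getElem _ _ hlen,
      List.getD_eq_getElem _ _ (by simpa using hlt)] at h2
    simpa using h2
  set v : ℕ → FL K Gu := fun m => of K (m, (1 : Gu)) with hv
  set x : FL K Gu := of K (0, g) with hx
  set f : FL K Gu := lnorm K Gu x (yRun K Gu k n) with hf
  set A : List ℕ := (iRun k n).map t with hA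
  set B : List ℕ := iRun (fun m => k' m - A.count m) n' with hB
  -- counting facts
  have hcnt : ∀ m, A.count m ≤ if m < n' then k' m else 0 := by
    intro m
    by_cases hmem : m ∈ A
    · rw [hA, List.mem_map] at hmem
      obtain ⟨j, hj, rfl⟩ := hmem
      have hjn : j < n := mem_iRun_lt k n hj
      obtain ⟨h1, h2⟩ := htfact j hjn
      rw [hA, List.count_map_of_injective _ _ htmono.injective, count_iRun, if_pos hjn,
        if_pos h1]
      exact h2
    · rw [List.count_eq_zero_of_not_mem hmem]
      exact Nat.zero_le _
  have hperm : (iRun k' n').Perm (A ++ B) := by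
    rw [List.perm_iff_count]
    intro m
    have hh := hcnt m
    rw [count_iRun, List.count_append, hB, count_iRun]
    by_cases h : m < n'
    · rw [if_pos h] at hh ⊢; rw [if_pos h]; omega
    · rw [if_neg h] at hh ⊢; rw [if_neg h]; omega
  -- the graded substitution
  set sfun : ℕ × Gu → FL K Gu := fun p => if p.2 = (1 : Gu) then of K (t p.1, (1 : Gu))
    else of K p with hsfun
  set φ : FL K Gu →ₗ⁅K⁆ FL K Gu := FreeLieAlgebra.lift K sfun with hφ
  have hφof : ∀ p : ℕ × Gu, φ (of K p) = sfun p := fun p => FreeLieAlgebra.lift_of_apply _ _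
  have hgs : IsGradedSubst K Gu φ := by
    intro i gg
    rw [hφof]
    by_cases h : gg = 1
    · subst h
      simp only [hsfun, if_pos rfl]
      exact IsHom.var _ _
    · simp only [hsfun, if_neg h]
      exact IsHom.var _ _
  have hφx : φ x = x := by
    rw [hx, hφof]
    simp only [hsfun]
    rw [if_neg hg1]
  have hφv : ∀ m, φ (v m) = v (t m) := by
    intro m
    rw [hv, hφof]
    simp only [hsfun, if_pos rfl]
  -- compute φ f
  have hφf : φ f = lnorm K Gu x (A.map v) := by
    rw [hf, yRun_eq, lnorm_map, hφx, hA, List.map_map, List.map_map]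
    congr 1
    exact List.map_congr_left (fun m _ => hφv m)
  -- the element of the T-ideal
  have hmemT : lnorm K Gu (φ f) (B.map v) ∈ tClosure K Gu {f} := by
    refine lnorm_mem K Gu _ ?_ _
    exact isTIdeal_tClosure K Gu {f} φ hgs f (subset_tClosure K Gu {f} rfl)
  have hu : lnorm K Gu (φ f) (B.map v) = lnorm K Gu x ((A ++ B).map v) := by
    rw [hφf, List.map_append, lnorm_append]
  have hdiff : lnorm K Gu x (yRun K Gu k' n') - lnorm K Gu x ((A ++ B).map v)
      ∈ IdUT3 K Gu e1 e2 := by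
    rw [yRun_eq]
    exact perm_diff_mem K hperm x
  rw [LieSubmodule.mem_sup]
  refine ⟨lnorm K Gu (φ f) (B.map v), hmemT,
    lnorm K Gu x (yRun K Gu k' n') - lnorm K Gu x ((A ++ B).map v), hdiff, ?_⟩
  rw [hu]
  abel

end Embedding

section Basis

/-- Finite-basis extraction from a partial well-order. -/
lemma exists_finite_basis {α : Type*} {r : α → α → Prop} {C : Set α}
    (h : C.PartiallyWellOrderedOn r) :
    ∃ F : Set α, F ⊆ C ∧ F.Finite ∧ ∀ c ∈ C, ∃ f ∈ F, r f c := by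
  classical
  rcases C.eq_empty_or_nonempty with rfl | ⟨x0, hx0⟩
  · exact ⟨∅, Set.Subset.rfl, Set.finite_empty, fun c hc => absurd hc (Set.notMem_empty c)⟩
  have : Nonempty α := ⟨x0⟩
  by_contra H
  push_neg at H
  have H' : ∀ F : Finset α, ↑F ⊆ C → ∃ c, c ∈ C ∧ ∀ f ∈ F, ¬ r f c := by
    intro F hF
    obtain ⟨c, hc1, hc2⟩ := H F hF F.finite_toSet
    exact ⟨c, hc1, fun f hf => hc2 f hf⟩
  choose! c hc1 hc2 using H'
  set U : ℕ → Finset α := fun n => Nat.rec ∅ (fun _ Un => insert (c Un) Un) n with hU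
  have hUsucc : ∀ n, U (n + 1) = insert (c (U n)) (U n) := fun n => rfl
  have hUsub : ∀ n, ↑(U n) ⊆ C := by
    intro n
    induction n with
    | zero => simp [hU]
    | succ n ih =>
      rw [hUsucc, Finset.coe_insert]
      exact Set.insert_subset (hc1 _ ih) ih
  have hUmono : ∀ m n, m ≤ n → U m ⊆ U n := by
    intro m n hmn
    induction n with
    | zero => rw [Nat.le_zero] at hmn; subst hmn; exact Finset.Subset.refl _
    | succ n ih =>
      rcases Nat.lt_succ_iff_lt_or_eq.mp (Nat.lt_succ_of_le hmn) with h' | rfl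
      · exact (ih (Nat.lt_succ_iff.mp h')).trans
          (by rw [hUsucc]; exact Finset.subset_insert _ _)
      · exact Finset.Subset.refl _
  set u : ℕ → α := fun n => c (U n) with hu
  have humem : ∀ n, u n ∈ C := fun n => hc1 _ (hUsub n)
  obtain ⟨m, n, hmn, hr⟩ := h.exists_lt humem
  have hmem : u m ∈ U n := by
    have h1 : u m ∈ U (m + 1) := by rw [hUsucc]; exact Finset.mem_insert_self _ _
    exact hUmono (m + 1) n hmn h1
  exact hc2 (U n) (hUsub n) (u m) hmem hr

end Basis


/-- **Lemma.** For any subset `C` of the set of commutators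
`[x_g, y₁^{(k₁)}, …, y_n^{(k_n)}]`, `n ≥ 0`, `kᵢ ≥ 0`, there are finitely many
`f₁, …, f_s ∈ C` with
`⟨f₁,…,f_s⟩^{T_G} + Id_G(UT₃⁽⁻⁾,Γ(e₁,e₂)) = ⟨C⟩^{T_G} + Id_G(UT₃⁽⁻⁾,Γ(e₁,e₂))`. -/
theorem stmt4 (K : Type*) [Field K] (g : Gu) (hg : g ∈ ({e1, e2, e1 * e2} : Set Gu))
    (C : Set (FL K Gu))
    (hC : C ⊆ {f | ∃ (n : ℕ) (k : ℕ → ℕ), f = lnorm K Gu (of K (0, g)) (yRun K Gu k n)}) :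
    ∃ F : Set (FL K Gu), F ⊆ C ∧ F.Finite ∧
      tClosure K Gu F ⊔ IdUT3 K Gu e1 e2 = tClosure K Gu C ⊔ IdUT3 K Gu e1 e2 := by
  classical
  simp only [Set.mem_insert_iff, Set.mem_singleton_iff] at hg
  have hg1 : g ≠ 1 := by rcases hg with rfl | rfl | rfl <;> decide
  have h1 : ∀ f : FL K Gu, f ∈ C → ∃ (n : ℕ) (k : ℕ → ℕ),
      f = lnorm K Gu (of K (0, g)) (yRun K Gu k n) := fun f hf => hC hf
  choose! nn kk hnk using h1
  have hle : (Set.univ : Set ℕ).PartiallyWellOrderedOn (· ≤ ·) :=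
    (Set.isWF_univ_iff.2 ⟨wellFounded_lt⟩).isPWO
  have hig := Set.PartiallyWellOrderedOn.partiallyWellOrderedOn_sublistForall₂ (· ≤ ·) hle
  have hCpwo : C.PartiallyWellOrderedOn (fun f f' => List.SublistForall₂ (· ≤ ·)
      ((List.range (nn f)).map (kk f)) ((List.range (nn f')).map (kk f'))) := by
    rw [Set.partiallyWellOrderedOn_iff_exists_lt]
    intro seq hseq
    exact hig.exists_lt (f := fun n => (List.range (nn (seq n))).map (kk (seq n)))
      (fun n x hx => Set.mem_univ x)
  obtain ⟨F, hFC, hFfin, hFb⟩ := exists_finite_basis hCpwo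
  refine ⟨F, hFC, hFfin, ?_⟩
  apply le_antisymm
  · exact sup_le_sup_right (tClosure_mono K Gu hFC) _
  · refine sup_le ?_ le_sup_right
    refine tClosure_le K Gu ?_ ?_
    · exact isTIdeal_sup K Gu (isTIdeal_tClosure K Gu F) (isTIdeal_IdUT3 K)
    · intro c hc
      obtain ⟨f, hfF, hemb⟩ := hFb c hc
      have hcin : c ∈ tClosure K Gu {f} ⊔ IdUT3 K Gu e1 e2 := by
        rw [hnk c hc]
        have hb := bridge K hg1 hemb
        rwa [← hnk f (hFC hfF)] at hb
      rw [SetLike.mem_coe]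
      have hle2 : tClosure K Gu {f} ⊔ IdUT3 K Gu e1 e2 ≤
          tClosure K Gu F ⊔ IdUT3 K Gu e1 e2 :=
        sup_le_sup_right (tClosure_mono K Gu (Set.singleton_subset_iff.2 hfF)) _
      exact hle2 hcin
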